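/- arXiv:2305.01970 — 2 statements merged into one kernel-verified Lean document; each statement's English description precedes it below -/
import Mathlib

section
/- Given countably many (or, more generally, at most λ many, indexed by i < i* ≤ λ) equivalence relations E_i, each defined on the set of λ-sequences from a set X with at least two elements, there exists a single equivalence relation E on λ-sequences from X together with, for each i < i*, an injective coding map c_i from λ-sequences to λ-sequences, such that for all sequences a, b: c_i(a) E c_i(b) if and only if a E_i b, and moreover c_i(a) is never E-equivalent to c_j(b) when i ≠ j. -/
open Cardinal

universe u v w

/-- Coding at most `λ` many equivalence relations on `λ`-sequences from `X`
(`|X| ≥ 2`) into a single equivalence relation via injective coding maps. -/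
theorem code_many_equivalence_relations {ι : Type u} {X : Type v} {I : Type w} [Infinite ι]
    (hX : ∃ x y : X, x ≠ y) (hI : Cardinal.lift.{u} (Cardinal.mk I) ≤ Cardinal.lift.{w} (Cardinal.mk ι))
    (E : I → (ι → X) → (ι → X) → Prop) (hE : ∀ i, Equivalence (E i)) :
    ∃ (F : (ι → X) → (ι → X) → Prop) (c : I → (ι → X) → (ι → X)),
      Equivalence F ∧
      (∀ i, Function.Injective (c i)) ∧
      (∀ i a b, F (c i a) (c i b) ↔ E i a b) ∧
      (∀ i j a b, i ≠ j → ¬ F (c i a) (c j b)) := by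
  classical
  obtain ⟨x, y, hxy⟩ := hX
  obtain ⟨e⟩ : Nonempty (I ↪ ι) := Cardinal.lift_mk_le'.mp hI
  -- ι ≃ ι ⊕ ι
  have hsum : Cardinal.mk (ι ⊕ ι) = Cardinal.mk ι := by
    rw [Cardinal.mk_sum]
    simp only [Cardinal.lift_id]
    exact Cardinal.add_eq_self (Cardinal.aleph0_le_mk ι)
  obtain ⟨s⟩ : Nonempty (ι ⊕ ι ≃ ι) := Cardinal.eq.mp hsum
  -- combined coding map
  set C : I → (ι → X) → (ι → X) := fun i a k =>
    match s.symm k with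
    | Sum.inl j => if j = e i then x else y
    | Sum.inr j => a j with hC
  have Cinj : ∀ i i' a a', C i a = C i' a' → i = i' ∧ a = a' := by
    intro i i' a a' h
    constructor
    · have h1 := congrFun h (s (Sum.inl (e i)))
      simp only [hC, Equiv.symm_apply_apply] at h1
      rw [if_true] at h1
      by_contra hne
      rw [if_neg (fun hh => hne (e.injective hh))] at h1
      exact hxy h1
    · funext j
      have h2 := congrFun h (s (Sum.inr j))
      simpa only [hC, Equiv.symm_apply_apply] using h2
  refine ⟨fun u v => u = v ∨ ∃ i a b, E i a b ∧ u = C i a ∧ v = C i b, C, ?_, ?_, ?_, ?_⟩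
  · constructor
    · intro u; exact Or.inl rfl
    · rintro u v (rfl | ⟨i, a, b, hab, rfl, rfl⟩)
      · exact Or.inl rfl
      · exact Or.inr ⟨i, b, a, (hE i).symm hab, rfl, rfl⟩
    · rintro u v w (rfl | ⟨i, a, b, hab, rfl, rfl⟩) hvw
      · exact hvw
      · rcases hvw with rfl | ⟨j, a', b', hab', heq, rfl⟩
        · exact Or.inr ⟨i, a, b, hab, rfl, rfl⟩
        · obtain ⟨rfl, rfl⟩ := Cinj _ _ _ _ heq
          exact Or.inr ⟨i, a, b', (hE i).trans hab hab', rfl, rfl⟩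
  · intro i a b h
    exact (Cinj _ _ _ _ h).2
  · intro i a b
    constructor
    · rintro (h | ⟨j, a', b', hab', h1, h2⟩)
      · obtain ⟨-, rfl⟩ := Cinj _ _ _ _ h
        exact (hE i).refl a
      · obtain ⟨rfl, rfl⟩ := Cinj _ _ _ _ h1
        obtain ⟨-, rfl⟩ := Cinj _ _ _ _ h2
        exact hab'
    · intro h
      exact Or.inr ⟨i, a, b, h, rfl, rfl⟩
  · rintro i j a b hne (h | ⟨k, a', b', -, h1, h2⟩)
    · exact hne (Cinj _ _ _ _ h).1
    · exact hne ((Cinj _ _ _ _ h1).1.trans (Cinj _ _ _ _ h2).1.symm)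
end

section
/- Independence from sequential goodness: suppose a ternary relation 'C is good over (A, B)' satisfies monotonicity in B (if C is good over (A, B') and B ⊆ B' then C is good over (A, B)) and the base extension property. If A_α is good over (A, ⋃_{i<α} A_i) for each α < n (n finite), then the family ⟨A_α : α < n⟩ is independent over A, where independence is defined by: for each α, A_α is good over (A, ⋃_{i≠α, i<n} A_i). -/
/-- Independence from sequential goodness: if `good` is monotone in its third
argument and satisfies the exchange property, and `A α` is good over
`(A, ⋃_{i<α} A i)` for each `α < n`, then the family is independent over `A`:
each `A α` is good over `(A, ⋃_{i ≠ α} A i)`. -/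
theorem independent_of_sequentially_good {U : Type*}
    (good : Set U → Set U → Set U → Prop)
    -- (a) monotonicity in the third argument
    (hmono : ∀ C A B B', good C A B' → B ⊆ B' → good C A B)
    -- (b) exchange
    (hexch : ∀ A₁ A₂ A B, good A₁ A B → good A₂ A (B ∪ A₁) → good A₁ A (B ∪ A₂))
    (A : Set U) {n : ℕ} (As : Fin n → Set U)
    (hgood : ∀ α : Fin n, good (As α) A (⋃ i : Fin n, ⋃ (_ : i < α), As i)) :
    ∀ α : Fin n, good (As α) A (⋃ i : Fin n, ⋃ (_ : i ≠ α), As i) := by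
  intro α
  have key : ∀ m : ℕ, α.val < m → m ≤ n →
      good (As α) A (⋃ i : Fin n, ⋃ (_ : i.val < m ∧ i ≠ α), As i) := by
    intro m
    induction m with
    | zero => intro h; omega
    | succ m ih =>
      intro hα hm
      rcases Nat.lt_or_ge α.val m with h | h
      · -- step case: absorb As ⟨m⟩ via exchange
        have hmn : m < n := hm
        set M : Fin n := ⟨m, hmn⟩ with hM
        set B : Set U := ⋃ i : Fin n, ⋃ (_ : i.val < m ∧ i ≠ α), As i with hB
        have hMα : M ≠ α := by
          intro he
          apply absurd h
          simp [← he, hM]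
        have hBα : (⋃ i : Fin n, ⋃ (_ : i < M), As i) = B ∪ As α := by
          ext x
          simp only [Set.mem_iUnion, Set.mem_union, hB]
          constructor
          · rintro ⟨i, hi, hx⟩
            by_cases hia : i = α
            · exact Or.inr (hia ▸ hx)
            · exact Or.inl ⟨i, ⟨hi, hia⟩, hx⟩
          · rintro (⟨i, ⟨hi, _⟩, hx⟩ | hx)
            · exact ⟨i, hi, hx⟩
            · exact ⟨α, h, hx⟩
        have h2 : good (As M) A (B ∪ As α) := by rw [← hBα]; exact hgood M
        have h1 : good (As α) A B := ih h (by omega)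
        have h3 := hexch _ _ _ _ h1 h2
        have hBM : (B ∪ As M) = ⋃ i : Fin n, ⋃ (_ : i.val < m + 1 ∧ i ≠ α), As i := by
          ext x
          simp only [Set.mem_iUnion, Set.mem_union, hB]
          constructor
          · rintro (⟨i, ⟨hi, hia⟩, hx⟩ | hx)
            · exact ⟨i, ⟨by omega, hia⟩, hx⟩
            · exact ⟨M, ⟨by simp [hM], hMα⟩, hx⟩
          · rintro ⟨i, ⟨hi, hia⟩, hx⟩
            rcases Nat.lt_or_ge i.val m with h' | h'
            · exact Or.inl ⟨i, ⟨h', hia⟩, hx⟩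
            · have : i = M := by
                apply Fin.ext
                simp [hM]; omega
              exact Or.inr (this ▸ hx)
        rw [← hBM]
        exact h3
      · -- base case: α.val = m
        have hαm : α.val = m := by omega
        have heq : (⋃ i : Fin n, ⋃ (_ : i.val < m + 1 ∧ i ≠ α), As i)
            = ⋃ i : Fin n, ⋃ (_ : i < α), As i := by
          ext x
          simp only [Set.mem_iUnion]
          constructor
          · rintro ⟨i, ⟨hi, hia⟩, hx⟩
            refine ⟨i, ?_, hx⟩
            have : i.val ≠ α.val := fun he => hia (Fin.ext he)
            exact Fin.lt_def.mpr (by omega)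
          · rintro ⟨i, hi, hx⟩
            have := Fin.lt_def.mp hi
            exact ⟨i, ⟨by omega, fun he => by simp [he] at this⟩, hx⟩
        rw [heq]
        exact hgood α
  have := key n α.isLt le_rfl
  have heq : (⋃ i : Fin n, ⋃ (_ : i.val < n ∧ i ≠ α), As i)
      = ⋃ i : Fin n, ⋃ (_ : i ≠ α), As i := by
    ext x
    simp only [Set.mem_iUnion]
    exact ⟨fun ⟨i, ⟨_, hia⟩, hx⟩ => ⟨i, hia, hx⟩, fun ⟨i, hia, hx⟩ => ⟨i, ⟨i.isLt, hia⟩, hx⟩⟩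
  rw [← heq]
  exact this
end
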